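/- Let s ≥ 1, k ≥ 3, and suppose there exists a prime p with s < p < k+s dividing the product ∏_{i=1}^{s} (q(s+1)+i). Then m^s(k,q) ≤ (s+1)(q+1)+k−3; i.e., no [n,k,d]_q A^sMDS code attains the length n = (s+1)(q+1)+k−2. -/

import Mathlib

set_option linter.unusedSectionVars false
set_option linter.unnecessarySimpa false
set_option linter.unusedVariables false
set_option maxHeartbeats 1600000


/-- The number of points (with multiplicity) of the projective system `G`
lying on the hyperplane `ker φ`. -/
noncomputable def hypCount {F : Type*} [Field F] [DecidableEq F] {n k : ℕ}
    (G : Fin n → Fin k → F) (φ : (Fin k → F) →ₗ[F] F) : ℕ :=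
  (Finset.univ.filter fun i => φ (G i) = 0).card

/-- `G` is (the projective system of) a non-degenerate linear `[n,k,d]_q` code:
an `n`-multiset of nonzero points spanning `PG(k-1,q)`, every hyperplane containing
at most `n - d` points, and some hyperplane (a secant) containing exactly `n - d`. -/
def IsCodePS (F : Type*) [Field F] [DecidableEq F] (n k d : ℕ)
    (G : Fin n → Fin k → F) : Prop :=
  0 < d ∧ (∀ i, G i ≠ 0) ∧ Submodule.span F (Set.range G) = ⊤ ∧
  (∀ φ : (Fin k → F) →ₗ[F] F, φ ≠ 0 → hypCount G φ + d ≤ n) ∧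
  (∃ φ : (Fin k → F) →ₗ[F] F, φ ≠ 0 ∧ hypCount G φ + d = n)

/-- `mPar F s k` is `m^s(k,q)`: the maximum length of a non-degenerate
`[n,k,d]_q` code with Singleton defect `s = n - k + 1 - d`. -/
noncomputable def mPar (F : Type*) [Field F] [Fintype F] [DecidableEq F] (s k : ℕ) : ℕ :=
  sSup {n : ℕ | ∃ d : ℕ, ∃ G : Fin n → Fin k → F, IsCodePS F n k d G ∧ d + k + s = n + 1}

namespace AMDS

open Finset Module Submodule

variable {F : Type*} [Field F] [Fintype F] [DecidableEq F] {n k : ℕ}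


open Finset Module Submodule

variable {F : Type*} [Field F] [Fintype F] [DecidableEq F] {n k : ℕ}

noncomputable instance : Fintype ((Fin k → F) →ₗ[F] F) :=
  Fintype.ofInjective (fun φ => (φ : (Fin k → F) → F)) LinearMap.coe_injective

lemma count_identity (G : Fin n → Fin k → F) (φ ψ : (Fin k → F) →ₗ[F] F) :
    hypCount G φ + ∑ c : F, hypCount G (ψ + c • φ) =
      n + Fintype.card F *
        (Finset.univ.filter fun i => φ (G i) = 0 ∧ ψ (G i) = 0).card := by
  classical
  have hpt : ∀ i, (∑ c : F, if (ψ + c • φ) (G i) = 0 then 1 else 0)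
      = Fintype.card F * (if φ (G i) = 0 ∧ ψ (G i) = 0 then 1 else 0)
        + (if ¬ (φ (G i) = 0) then 1 else 0) := by
    intro i
    by_cases h1 : φ (G i) = 0
    · by_cases h2 : ψ (G i) = 0
      · simp [h1, h2, LinearMap.add_apply, LinearMap.smul_apply, smul_eq_mul]
      · simp [h1, h2, LinearMap.add_apply, LinearMap.smul_apply, smul_eq_mul]
    · have : ∀ c : F, (ψ + c • φ) (G i) = 0 ↔ c = -ψ (G i) / φ (G i) := by
        intro c
        simp only [LinearMap.add_apply, LinearMap.smul_apply, smul_eq_mul]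
        rw [eq_div_iff h1]
        constructor
        · intro h; linear_combination h
        · intro h; linear_combination h
      simp only [this, h1, if_false, false_and, if_false, mul_zero, not_false_iff, if_true,
        zero_add]
      rw [Finset.sum_ite_eq' Finset.univ (-ψ (G i) / φ (G i)) (fun _ => (1:ℕ))]
      simp
  have hsum : ∑ c : F, hypCount G (ψ + c • φ)
      = Fintype.card F * (Finset.univ.filter fun i => φ (G i) = 0 ∧ ψ (G i) = 0).card
        + (Finset.univ.filter fun i => ¬ (φ (G i) = 0)).card := by
    calc ∑ c : F, hypCount G (ψ + c • φ)
        = ∑ c : F, ∑ i, (if (ψ + c • φ) (G i) = 0 then 1 else 0) := by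
          simp only [hypCount, Finset.card_filter]
      _ = ∑ i, ∑ c : F, (if (ψ + c • φ) (G i) = 0 then 1 else 0) := Finset.sum_comm
      _ = ∑ i, (Fintype.card F * (if φ (G i) = 0 ∧ ψ (G i) = 0 then 1 else 0)
            + (if ¬ (φ (G i) = 0) then 1 else 0)) := by
          exact Finset.sum_congr rfl fun i _ => hpt i
      _ = _ := by
          rw [Finset.sum_add_distrib, ← Finset.mul_sum]
          simp only [← Finset.card_filter]
  have hsplit := Finset.card_filter_add_card_filter_not
    (s := (Finset.univ : Finset (Fin n))) (fun i => φ (G i) = 0)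
  simp only [Finset.card_univ, Fintype.card_fin] at hsplit
  rw [hsum]
  unfold hypCount
  omega

def IndepPair (φ ψ : (Fin k → F) →ₗ[F] F) : Prop :=
  ∀ a b : F, a • φ + b • ψ = 0 → a = 0 ∧ b = 0

lemma IndepPair.left_ne {φ ψ : (Fin k → F) →ₗ[F] F} (h : IndepPair φ ψ) : φ ≠ 0 := by
  intro h0
  have := h 1 0 (by simp [h0])
  exact one_ne_zero this.1

lemma IndepPair.add_ne {φ ψ : (Fin k → F) →ₗ[F] F} (h : IndepPair φ ψ) (c : F) :
    ψ + c • φ ≠ 0 := by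
  intro h0
  have := h c 1 (by rw [← h0]; module)
  exact one_ne_zero this.2

lemma key_ineq (G : Fin n → Fin k → F) (d : ℕ)
    (hb : ∀ χ : (Fin k → F) →ₗ[F] F, χ ≠ 0 → hypCount G χ + d ≤ n)
    {φ ψ : (Fin k → F) →ₗ[F] F} (h : IndepPair φ ψ) :
    Fintype.card F * (Finset.univ.filter fun i => φ (G i) = 0 ∧ ψ (G i) = 0).card
      + (Fintype.card F + 1) * d ≤ Fintype.card F * n := by
  have hid := count_identity G φ ψ
  have h1 : hypCount G φ + d ≤ n := hb φ h.left_ne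
  have h2 : ∑ c : F, (hypCount G (ψ + c • φ) + d) ≤ ∑ _c : F, n :=
    Finset.sum_le_sum fun c _ => hb _ (h.add_ne c)
  rw [Finset.sum_add_distrib, Finset.sum_const, Finset.card_univ, smul_eq_mul] at h2
  simp only [Finset.sum_const, Finset.card_univ, smul_eq_mul] at h2
  have e : (Fintype.card F + 1) * d = Fintype.card F * d + d := by ring
  set q := Fintype.card F
  set m := (Finset.univ.filter fun i => φ (G i) = 0 ∧ ψ (G i) = 0).card
  set A := q * m
  set B := q * d
  set C := q * n
  set S := ∑ c : F, hypCount G (ψ + c • φ)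
  omega






lemma exists_apply_ne_zero {φ : (Fin k → F) →ₗ[F] F} (hφ : φ ≠ 0) : ∃ x, φ x ≠ 0 := by
  by_contra h
  push_neg at h
  exact hφ (LinearMap.ext fun x => h x)

lemma exists_uv {φ ψ : (Fin k → F) →ₗ[F] F} (h : IndepPair φ ψ) :
    ∃ u v, φ u = 1 ∧ ψ u = 0 ∧ φ v = 0 ∧ ψ v = 1 := by
  have hφ : φ ≠ 0 := by
    intro h0
    have := h 1 0 (by simp [h0])
    exact one_ne_zero this.1
  obtain ⟨w', hw'⟩ := exists_apply_ne_zero hφ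
  set w := (φ w')⁻¹ • w' with hw
  have hφw : φ w = 1 := by
    simp [hw, map_smul, inv_mul_cancel₀ hw']
  have hχ : ψ - ψ w • φ ≠ 0 := by
    intro h0
    have heq : ψ w • φ + (-1 : F) • ψ = -(ψ - ψ w • φ) := by module
    have := h (ψ w) (-1) (by rw [heq, h0, neg_zero])
    have h1 : (-1 : F) = 0 := this.2
    simpa using h1
  obtain ⟨z, hz⟩ := exists_apply_ne_zero hχ
  have hz' : ψ z - ψ w * φ z ≠ 0 := by
    simpa [LinearMap.sub_apply, LinearMap.smul_apply, smul_eq_mul] using hz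
  set v' := z - φ z • w with hv'
  have hφv' : φ v' = 0 := by
    simp [hv', map_sub, map_smul, hφw, smul_eq_mul]
  have hψv' : ψ v' = ψ z - ψ w * φ z := by
    simp [hv', map_sub, map_smul, smul_eq_mul]; ring
  set v := (ψ v')⁻¹ • v' with hv
  have hψv'ne : ψ v' ≠ 0 := by rw [hψv']; exact hz'
  have hφv : φ v = 0 := by simp [hv, map_smul, hφv', smul_eq_mul]
  have hψv : ψ v = 1 := by simp [hv, map_smul, smul_eq_mul, inv_mul_cancel₀ hψv'ne]
  refine ⟨w - ψ w • v, v, ?_, ?_, hφv, hψv⟩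
  · simp [map_sub, map_smul, hφw, hφv, smul_eq_mul]
  · simp [map_sub, map_smul, hψv, smul_eq_mul]

lemma mem_span_pair {φ ψ : (Fin k → F) →ₗ[F] F} (h : IndepPair φ ψ)
    (χ : (Fin k → F) →ₗ[F] F) (hχ : ∀ x, φ x = 0 → ψ x = 0 → χ x = 0) :
    ∃ a b : F, χ = a • φ + b • ψ := by
  obtain ⟨u, v, hu1, hu2, hv1, hv2⟩ := exists_uv h
  refine ⟨χ u, χ v, ?_⟩
  refine LinearMap.ext fun x => ?_
  have hy : φ (x - φ x • u - ψ x • v) = 0 := by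
    simp [map_sub, map_smul, hu1, hv1, smul_eq_mul]
  have hy' : ψ (x - φ x • u - ψ x • v) = 0 := by
    simp [map_sub, map_smul, hu2, hv2, smul_eq_mul]
  have := hχ _ hy hy'
  simp only [map_sub, map_smul, smul_eq_mul] at this
  simp only [LinearMap.add_apply, LinearMap.smul_apply, smul_eq_mul]
  linear_combination this

lemma finrank_ann (W : Submodule F (Fin k → F)) :
    finrank F W.dualAnnihilator + finrank F W = k := by
  have h1 : finrank F ((Fin k → F) ⧸ W) = finrank F W.dualAnnihilator :=
    (Subspace.quotEquivAnnihilator W).finrank_eq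
  have h2 := Submodule.finrank_quotient_add_finrank W
  rw [h1] at h2
  rw [h2]
  rw [Module.finrank_pi]; simp

lemma exists_indep_pair {W : Submodule F (Fin k → F)} (hW : finrank F W + 2 ≤ k)
    {φ : (Fin k → F) →ₗ[F] F} (hφ : φ ≠ 0) (hWφ : ∀ x ∈ W, φ x = 0) :
    ∃ ψ, IndepPair φ ψ ∧ ∀ x ∈ W, ψ x = 0 := by
  have hann : finrank F W.dualAnnihilator + finrank F W = k := finrank_ann W
  have hφmem : φ ∈ W.dualAnnihilator := (Submodule.mem_dualAnnihilator φ).mpr hWφ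
  have hns : ¬ (W.dualAnnihilator ≤ Submodule.span F {φ}) := by
    intro hle
    have h1 : finrank F W.dualAnnihilator ≤ finrank F (Submodule.span F {φ}) :=
      Submodule.finrank_mono hle
    rw [finrank_span_singleton hφ] at h1
    omega
  obtain ⟨ψ, hψmem, hψns⟩ := SetLike.not_le_iff_exists.mp hns
  refine ⟨ψ, ?_, fun x hx => (Submodule.mem_dualAnnihilator ψ).mp hψmem x hx⟩
  intro a b hab
  by_cases hb : b = 0
  · subst hb
    simp only [zero_smul, add_zero, smul_eq_zero] at hab
    exact ⟨hab.resolve_right hφ, rfl⟩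
  · exfalso
    apply hψns
    rw [Submodule.mem_span_singleton]
    refine ⟨b⁻¹ * (-a), ?_⟩
    have h5 : b • ψ = (-a) • φ := by
      have h6 := eq_neg_of_add_eq_zero_right hab
      rw [h6]; exact (neg_smul _ _).symm
    rw [mul_smul, ← h5, smul_smul, inv_mul_cancel₀ hb, one_smul]

lemma card_le_filter_of_forall (G : Fin n → Fin k → F) {T : Finset (Fin k → F)}
    {P : Fin n → Prop} [DecidablePred P]
    (h : ∀ v ∈ T, ∃ i, P i ∧ G i = v) : T.card ≤ (Finset.univ.filter P).card := by
  have hsub : T ⊆ (Finset.univ.filter P).image G := by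
    intro v hv
    obtain ⟨i, hPi, hGi⟩ := h v hv
    exact Finset.mem_image.mpr ⟨i, by simp [hPi], hGi⟩
  calc T.card ≤ ((Finset.univ.filter P).image G).card := Finset.card_le_card hsub
    _ ≤ (Finset.univ.filter P).card := Finset.card_image_le

lemma exists_indep_finset_subset (s : Set (Fin k → F)) (hs : s.Finite) {j : ℕ}
    (hj : j ≤ finrank F (Submodule.span F s)) :
    ∃ T : Finset (Fin k → F), ↑T ⊆ s ∧ T.card = j ∧
      LinearIndependent F (Subtype.val : ↑(↑T : Set (Fin k → F)) → (Fin k → F)) := by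
  obtain ⟨b, hbsub, hbspan, hbind⟩ := exists_linearIndependent F s
  have hbfin : b.Finite := hs.subset hbsub
  haveI := hbfin.fintype
  have hcard : j ≤ b.toFinset.card := by
    have h1 := finrank_span_set_eq_card (s := b) hbind
    rw [hbspan] at h1
    omega
  obtain ⟨T, hTsub, hTcard⟩ := Finset.exists_subset_card_eq hcard
  refine ⟨T, ?_, hTcard, ?_⟩
  · intro v hv
    exact hbsub (by simpa using hTsub hv)
  · refine (LinearIndepOn.mono (v := (id : (Fin k → F) → (Fin k → F))) (s := b) hbind ?_ :
      LinearIndepOn F id (↑T : Set (Fin k → F)))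
    intro v hv
    simpa using hTsub (by simpa using hv)

lemma finrank_span_finset (T : Finset (Fin k → F))
    (hind : LinearIndependent F (Subtype.val : ↑(↑T : Set (Fin k → F)) → (Fin k → F))) :
    finrank F (Submodule.span F (↑T : Set (Fin k → F))) = T.card := by
  classical
  rw [finrank_span_set_eq_card hind]
  simp

lemma mem_ker_pair {φ ψ : (Fin k → F) →ₗ[F] F} (h : IndepPair φ ψ)
    {W : Submodule F (Fin k → F)} (hfr : finrank F W + 2 = k)
    (hWφ : ∀ x ∈ W, φ x = 0) (hWψ : ∀ x ∈ W, ψ x = 0) :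
    ∀ x, φ x = 0 → ψ x = 0 → x ∈ W := by
  obtain ⟨u, v, hu1, hu2, hv1, hv2⟩ := exists_uv h
  set T2 := LinearMap.prod φ ψ with hT2
  have hrange : LinearMap.range T2 = ⊤ := by
    rw [LinearMap.range_eq_top]
    rintro ⟨a, b⟩
    refine ⟨a • u + b • v, ?_⟩
    simp [hT2, LinearMap.prod_apply, map_add, map_smul, smul_eq_mul, hu1, hu2, hv1, hv2]
  have hker : finrank F (LinearMap.ker T2) + 2 = k := by
    have h1 := LinearMap.finrank_range_add_finrank_ker T2
    rw [hrange] at h1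
    have h2 : finrank F ((Fin k → F)) = k := by rw [Module.finrank_pi]; simp
    have h3 : finrank F (F × F) = 2 := by simp
    rw [finrank_top, h2] at h1
    omega
  have hle : W ≤ LinearMap.ker T2 := by
    intro x hx
    rw [LinearMap.mem_ker, hT2]
    simp [LinearMap.prod_apply, Prod.ext_iff, hWφ x hx, hWψ x hx]
  have heq : W = LinearMap.ker T2 :=
    Submodule.eq_of_le_of_finrank_eq hle (by omega)
  intro x h1 h2
  rw [heq, LinearMap.mem_ker, hT2]
  simp [LinearMap.prod_apply, Prod.ext_iff, h1, h2]





lemma single_sum (x : Fin k → F) : (∑ i, x i • (Pi.single i 1 : Fin k → F)) = x := by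
  funext j
  rw [Finset.sum_apply]
  simp [Pi.single_apply, smul_eq_mul]

lemma eq_zero_of_forall_single {φ : (Fin k → F) →ₗ[F] F}
    (h : ∀ i, φ (Pi.single i 1) = 0) : φ = 0 := by
  refine LinearMap.ext fun x => ?_
  have : φ x = φ (∑ i, x i • (Pi.single i 1 : Fin k → F)) := by rw [single_sum]
  rw [this, map_sum]
  simp [map_smul, h]

noncomputable def Nz (φ : (Fin k → F) →ₗ[F] F) : (Fin k → F) →ₗ[F] F :=
  if h : (Finset.univ.filter fun i : Fin k => φ (Pi.single i 1) ≠ 0).Nonempty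
  then (φ (Pi.single ((Finset.univ.filter fun i : Fin k => φ (Pi.single i 1) ≠ 0).min' h) 1))⁻¹ • φ
  else φ

lemma nzfilter_nonempty {φ : (Fin k → F) →ₗ[F] F} (hφ : φ ≠ 0) :
    (Finset.univ.filter fun i : Fin k => φ (Pi.single i 1) ≠ 0).Nonempty := by
  by_contra h
  rw [Finset.not_nonempty_iff_eq_empty, Finset.filter_eq_empty_iff] at h
  push_neg at h
  exact hφ (eq_zero_of_forall_single fun i => h (Finset.mem_univ i))

lemma Nz_spec {φ : (Fin k → F) →ₗ[F] F} (hφ : φ ≠ 0) :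
    ∃ c : F, c ≠ 0 ∧ Nz φ = c • φ := by
  have h := nzfilter_nonempty hφ
  have hmem := Finset.min'_mem _ h
  rw [Finset.mem_filter] at hmem
  refine ⟨_, inv_ne_zero hmem.2, ?_⟩
  rw [Nz, dif_pos h]

lemma Nz_ne_zero {φ : (Fin k → F) →ₗ[F] F} (hφ : φ ≠ 0) : Nz φ ≠ 0 := by
  obtain ⟨c, hc, hEq⟩ := Nz_spec hφ
  rw [hEq]
  exact smul_ne_zero hc hφ

lemma Nz_smul {φ : (Fin k → F) →ₗ[F] F} (hφ : φ ≠ 0) {c : F} (hc : c ≠ 0) :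
    Nz (c • φ) = Nz φ := by
  have hfe : (Finset.univ.filter fun i : Fin k => (c • φ) (Pi.single i 1) ≠ 0)
      = (Finset.univ.filter fun i : Fin k => φ (Pi.single i 1) ≠ 0) := by
    apply Finset.filter_congr
    intro i _
    simp [LinearMap.smul_apply, smul_eq_mul, hc]
  have h1 : (Finset.univ.filter fun i : Fin k => (c • φ) (Pi.single i 1) ≠ 0).Nonempty :=
    nzfilter_nonempty (smul_ne_zero hc hφ)
  have h2 : (Finset.univ.filter fun i : Fin k => φ (Pi.single i 1) ≠ 0).Nonempty :=
    nzfilter_nonempty hφ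
  rw [Nz, dif_pos h1, Nz, dif_pos h2]
  have hmin : (Finset.univ.filter fun i : Fin k => (c • φ) (Pi.single i 1) ≠ 0).min' h1
      = (Finset.univ.filter fun i : Fin k => φ (Pi.single i 1) ≠ 0).min' h2 := by
    congr 1
  rw [hmin]
  rw [LinearMap.smul_apply, smul_eq_mul, mul_inv_rev, smul_smul, mul_assoc,
    inv_mul_cancel₀ hc, mul_one]

lemma Nz_idem {φ : (Fin k → F) →ₗ[F] F} (hφ : φ ≠ 0) : Nz (Nz φ) = Nz φ := by
  obtain ⟨c, hc, hEq⟩ := Nz_spec hφ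
  conv_lhs => rw [hEq]
  rw [Nz_smul hφ hc]

lemma hypCount_smul (G : Fin n → Fin k → F) {c : F} (hc : c ≠ 0)
    (φ : (Fin k → F) →ₗ[F] F) : hypCount G (c • φ) = hypCount G φ := by
  unfold hypCount
  congr 1
  apply Finset.filter_congr
  intro i _
  simp [LinearMap.smul_apply, smul_eq_mul, hc]

lemma hypCount_Nz (G : Fin n → Fin k → F) {φ : (Fin k → F) →ₗ[F] F} (hφ : φ ≠ 0) :
    hypCount G (Nz φ) = hypCount G φ := by
  obtain ⟨c, hc, hEq⟩ := Nz_spec hφ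
  rw [hEq, hypCount_smul G hc]


lemma partA {d s : ℕ} (G : Fin n → Fin k → F) (hk : 3 ≤ k)
    (hG : IsCodePS F n k d G) (hlen : d + k + s = n + 1) :
    n + 2 ≤ (s + 1) * (Fintype.card F + 1) + k := by
  classical
  obtain ⟨hd, hnz, hspan, hb, φ₀, hφ₀, hsec⟩ := hG
  set S₀ : Set (Fin k → F) := {v | ∃ i, φ₀ (G i) = 0 ∧ G i = v} with hS₀
  have hS₀fin : S₀.Finite := by
    apply (Set.finite_range G).subset
    rintro v ⟨i, _, h⟩
    exact ⟨i, h⟩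
  set W₀ := Submodule.span F S₀ with hW₀
  have hW₀ker : ∀ x ∈ W₀, φ₀ x = 0 := by
    have hle : W₀ ≤ LinearMap.ker φ₀ := by
      rw [hW₀, Submodule.span_le]
      rintro v ⟨i, h0, hGi⟩
      rw [SetLike.mem_coe, LinearMap.mem_ker, ← hGi]
      exact h0
    intro x hx
    exact LinearMap.mem_ker.mp (hle hx)
  by_cases hdim : finrank F W₀ + 2 ≤ k
  · -- all points of the secant hyperplane in a small subspace: contradiction
    exfalso
    obtain ⟨ψ, hpair, hψker⟩ := exists_indep_pair hdim hφ₀ hW₀ker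
    have hkey := key_ineq G d hb hpair
    have hflt : (Finset.univ.filter fun i => φ₀ (G i) = 0 ∧ ψ (G i) = 0)
        = (Finset.univ.filter fun i => φ₀ (G i) = 0) := by
      apply Finset.filter_congr
      intro i _
      constructor
      · exact fun h => h.1
      · intro h
        refine ⟨h, hψker _ ?_⟩
        exact Submodule.subset_span ⟨i, h, rfl⟩
    rw [hflt] at hkey
    have hm' : (Finset.univ.filter fun i => φ₀ (G i) = 0).card + d = n := hsec
    have e1 : Fintype.card F * (Finset.univ.filter fun i => φ₀ (G i) = 0).card + Fintype.card F * d = Fintype.card F * n := by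
      rw [← Nat.mul_add, hm']
    have e2 : (Fintype.card F + 1) * d = Fintype.card F * d + d := by ring
    omega
  · -- there are k-2 independent points on the secant hyperplane
    push_neg at hdim
    obtain ⟨T, hTsub, hTcard, hTind⟩ :=
      exists_indep_finset_subset S₀ hS₀fin (j := k - 2) (by rw [← hW₀]; omega)
    set W := Submodule.span F (↑T : Set (Fin k → F)) with hW
    have hWfr : finrank F W = k - 2 := by rw [hW, finrank_span_finset T hTind, hTcard]
    have hWker : ∀ x ∈ W, φ₀ x = 0 := by
      intro x hx
      refine hW₀ker x ?_
      have : W ≤ W₀ := by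
        rw [hW, hW₀]
        exact Submodule.span_mono hTsub
      exact this hx
    obtain ⟨ψ, hpair, hψker⟩ := exists_indep_pair (by omega) hφ₀ hWker
    have hkey := key_ineq G d hb hpair
    have hmge : k - 2 ≤ (Finset.univ.filter fun i => φ₀ (G i) = 0 ∧ ψ (G i) = 0).card := by
      rw [← hTcard]
      apply card_le_filter_of_forall
      intro v hv
      obtain ⟨i, h0, hGi⟩ := hTsub hv
      refine ⟨i, ⟨h0, ?_⟩, hGi⟩
      rw [hGi]
      exact hψker v (Submodule.subset_span hv)
    -- arithmetic
    set m := (Finset.univ.filter fun i => φ₀ (G i) = 0 ∧ ψ (G i) = 0).card with hm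
    have e2 : (Fintype.card F + 1) * d = Fintype.card F * d + d := by ring
    have e3 : Fintype.card F * (k - 2) ≤ Fintype.card F * m := Nat.mul_le_mul_left (Fintype.card F) hmge
    have e4 : Fintype.card F * (k - 2) + Fintype.card F * 2 = Fintype.card F * k := by
      rw [← Nat.mul_add]
      congr 1
      omega
    have e5 : Fintype.card F * d + Fintype.card F * k + Fintype.card F * s = Fintype.card F * n + Fintype.card F * 1 := by
      rw [← Nat.mul_add, ← Nat.mul_add, ← Nat.mul_add, hlen]
    have e6 : (s + 1) * (Fintype.card F + 1) = Fintype.card F * s + Fintype.card F + s + 1 := by ring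
    set A1 := Fintype.card F * m
    set A2 := Fintype.card F * d
    set A3 := Fintype.card F * n
    set A4 := Fintype.card F * k
    set A5 := Fintype.card F * s
    set A6 := Fintype.card F * (k - 2)
    omega

lemma codim2_bound {d s : ℕ} (G : Fin n → Fin k → F)
    (hb : ∀ χ : (Fin k → F) →ₗ[F] F, χ ≠ 0 → hypCount G χ + d ≤ n)
    (hd : d = (s + 1) * Fintype.card F) (hn : n + 1 = d + s + k)
    {φ ψ : (Fin k → F) →ₗ[F] F} (h : IndepPair φ ψ) :
    (Finset.univ.filter fun i => φ (G i) = 0 ∧ ψ (G i) = 0).card + 2 ≤ k := by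
  have hkey := key_ineq G d hb h
  have hqpos : 0 < Fintype.card F := Fintype.card_pos
  set m := (Finset.univ.filter fun i => φ (G i) = 0 ∧ ψ (G i) = 0).card with hm
  have h1 : Fintype.card F * (m + 2) ≤ Fintype.card F * k := by
    have e2 : (Fintype.card F + 1) * d = Fintype.card F * d + d := by ring
    have f1 : Fintype.card F * n + Fintype.card F * 1
        = Fintype.card F * d + Fintype.card F * s + Fintype.card F * k := by
      rw [← Nat.mul_add, ← Nat.mul_add, ← Nat.mul_add, hn]
    have f3 : d = s * Fintype.card F + Fintype.card F := by rw [hd]; ring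
    have f4 : Fintype.card F * s = s * Fintype.card F := by ring
    have e8 : Fintype.card F * (m + 2) = Fintype.card F * m + Fintype.card F * 2 := by ring
    set A1 := Fintype.card F * m
    set A2 := Fintype.card F * d
    set A3 := Fintype.card F * n
    set A4 := Fintype.card F * s
    set A5 := Fintype.card F * k
    set A6 := s * Fintype.card F
    set A7 := Fintype.card F * (m + 2)
    omega
  exact Nat.le_of_mul_le_mul_left h1 hqpos

open scoped Classical in
lemma subspace_card_bound {d s : ℕ} (G : Fin n → Fin k → F)
    (hb : ∀ χ : (Fin k → F) →ₗ[F] F, χ ≠ 0 → hypCount G χ + d ≤ n)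
    (hd : d = (s + 1) * Fintype.card F) (hn : n + 1 = d + s + k)
    {W : Submodule F (Fin k → F)} (hW : finrank F W + 2 ≤ k) :
    (Finset.univ.filter fun i => G i ∈ W).card + 2 ≤ k := by
  have hann := finrank_ann W
  have hne : W.dualAnnihilator ≠ ⊥ := by
    intro hbot
    rw [hbot, finrank_bot] at hann
    omega
  obtain ⟨φ, hφmem, hφne⟩ := (Submodule.ne_bot_iff _).mp hne
  have hφker : ∀ x ∈ W, φ x = 0 := (Submodule.mem_dualAnnihilator φ).mp hφmem
  obtain ⟨ψ, hpair, hψker⟩ := exists_indep_pair hW hφne hφker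
  have hsub : (Finset.univ.filter fun i => G i ∈ W)
      ⊆ (Finset.univ.filter fun i => φ (G i) = 0 ∧ ψ (G i) = 0) := by
    intro i hi
    rw [Finset.mem_filter] at hi ⊢
    exact ⟨hi.1, hφker _ hi.2, hψker _ hi.2⟩
  have h1 := Finset.card_le_card hsub
  have h2 := codim2_bound G hb hd hn hpair
  omega

open scoped Classical in
lemma secant_subspace_card {d s : ℕ} (G : Fin n → Fin k → F)
    (hb : ∀ χ : (Fin k → F) →ₗ[F] F, χ ≠ 0 → hypCount G χ + d ≤ n)
    (hd : d = (s + 1) * Fintype.card F) (hn : n + 1 = d + s + k)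
    (u : ℕ) :
    ∀ (W : Submodule F (Fin k → F)) (φ : (Fin k → F) →ₗ[F] F),
      hypCount G φ + d = n → (∀ x ∈ W, φ x = 0) → finrank F W + 2 + u = k →
      (Finset.univ.filter fun i => G i ∈ W).card ≤ finrank F W := by
  induction u with
  | zero =>
    intro W φ hsec hker hfr
    have := subspace_card_bound G hb hd hn (W := W) (by omega)
    omega
  | succ u ih =>
    intro W φ hsec hker hfr
    by_cases hex : ∃ i, φ (G i) = 0 ∧ G i ∉ W
    · obtain ⟨i0, hφi, hWi⟩ := hex
      have hGne : G i0 ≠ 0 := fun h0 => hWi (h0 ▸ W.zero_mem)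
      set W' := W ⊔ Submodule.span F {G i0} with hW'
      have hmemW' : G i0 ∈ W' := by
        rw [hW']
        exact Submodule.mem_sup_right (Submodule.subset_span (Set.mem_singleton _))
      have hW'ker : ∀ x ∈ W', φ x = 0 := by
        have hle : W' ≤ LinearMap.ker φ := by
          rw [hW']
          apply sup_le
          · intro y hy; rw [LinearMap.mem_ker]; exact hker y hy
          · rw [Submodule.span_le]
            intro y hy
            rw [Set.mem_singleton_iff] at hy
            rw [SetLike.mem_coe, LinearMap.mem_ker, hy]
            exact hφi
        exact fun x hx => LinearMap.mem_ker.mp (hle hx)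
      have hlt : W < W' := by
        apply lt_of_le_of_ne le_sup_left
        intro hEq
        exact hWi (hEq ▸ hmemW')
      have hfr' : finrank F W' = finrank F W + 1 := by
        have h1 := Submodule.finrank_sup_add_finrank_inf_eq W (Submodule.span F {G i0})
        have h2 : finrank F (Submodule.span F {G i0}) = 1 := finrank_span_singleton hGne
        have h3 := Submodule.finrank_lt_finrank_of_lt hlt
        rw [h2, ← hW'] at h1
        omega
      have hcard := ih W' φ hsec hW'ker (by omega)
      have hssub : (Finset.univ.filter fun i => G i ∈ W)
          ⊂ (Finset.univ.filter fun i => G i ∈ W') := by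
        rw [Finset.ssubset_iff_of_subset]
        · exact ⟨i0, by simp [hmemW'], by simp [hWi]⟩
        · intro i hi
          rw [Finset.mem_filter] at hi ⊢
          exact ⟨hi.1, le_sup_left (α := Submodule F (Fin k → F)) hi.2⟩
      have := Finset.card_lt_card hssub
      omega
    · push_neg at hex
      have hsub2 : (Finset.univ.filter fun i => φ (G i) = 0)
          ⊆ (Finset.univ.filter fun i => G i ∈ W) := by
        intro i hi
        rw [Finset.mem_filter] at hi ⊢
        exact ⟨hi.1, hex i hi.2⟩
      have h1 := Finset.card_le_card hsub2
      have h2 := subspace_card_bound G hb hd hn (W := W) (by omega)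
      have h3 : (Finset.univ.filter fun i => φ (G i) = 0).card + d = n := hsec
      omega

open scoped Classical in
/-- Normalized secant functionals vanishing on `T`. -/
noncomputable def MS (G : Fin n → Fin k → F) (d : ℕ) (T : Finset (Fin k → F)) :
    Finset ((Fin k → F) →ₗ[F] F) :=
  Finset.univ.filter fun φ =>
    (φ ≠ 0 ∧ Nz φ = φ) ∧ hypCount G φ + d = n ∧ ∀ v ∈ T, φ v = 0

open scoped Classical in
lemma Qrec {d s : ℕ} (G : Fin n → Fin k → F)
    (hd0 : 0 < d) (hspan : Submodule.span F (Set.range G) = ⊤)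
    (hb : ∀ χ : (Fin k → F) →ₗ[F] F, χ ≠ 0 → hypCount G χ + d ≤ n)
    (hd : d = (s + 1) * Fintype.card F) (hn : n + 1 = d + s + k) :
    ∀ (c j : ℕ), j + c + 2 = k → ∀ T : Finset (Fin k → F),
      ↑T ⊆ Set.range G → T.card = j →
      LinearIndependent F (Subtype.val : ↑(↑T : Set (Fin k → F)) → (Fin k → F)) →
      (Finset.univ.filter fun i => G i ∈ Submodule.span F (↑T : Set (Fin k → F))).card = j ∧
      (MS G d T).card * ∏ u ∈ Finset.Icc 2 (c + 1), (s + u)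
        = (Fintype.card F + 1) * ∏ u ∈ Finset.Icc 2 (c + 1), (d + s + u) := by
  intro c
  induction c with
  | zero =>
    intro j hjk T hTsub hTcard hTind
    set W := Submodule.span F (↑T : Set (Fin k → F)) with hW
    have hWfr : finrank F W = j := by rw [hW, finrank_span_finset T hTind, hTcard]
    have hcount : (Finset.univ.filter fun i => G i ∈ W).card = j := by
      have h1 := subspace_card_bound G hb hd hn (W := W) (by omega)
      have h2 : T.card ≤ (Finset.univ.filter fun i => G i ∈ W).card := by
        apply card_le_filter_of_forall
        intro v hv
        obtain ⟨i, hGi⟩ := hTsub hv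
        exact ⟨i, by rw [hGi]; exact Submodule.subset_span hv, hGi⟩
      omega
    refine ⟨hcount, ?_⟩
    rw [show Finset.Icc 2 (0 + 1) = (∅ : Finset ℕ) from Finset.Icc_eq_empty (by omega)]
    simp only [Finset.prod_empty, mul_one]
    -- find an independent pair of functionals vanishing on W
    have hann := finrank_ann W
    have hne : W.dualAnnihilator ≠ ⊥ := by
      intro hbot
      rw [hbot, finrank_bot] at hann
      omega
    obtain ⟨φ₀, hφ₀mem, hφ₀ne⟩ := (Submodule.ne_bot_iff _).mp hne
    have hφ₀ker : ∀ x ∈ W, φ₀ x = 0 := (Submodule.mem_dualAnnihilator φ₀).mp hφ₀mem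
    obtain ⟨ψ, hpair, hψker⟩ := exists_indep_pair (by omega) hφ₀ne hφ₀ker
    -- the codim-2 intersection contains exactly j = k-2 points
    have hmle := codim2_bound G hb hd hn hpair
    have hmge : (Finset.univ.filter fun i => G i ∈ W).card
        ≤ (Finset.univ.filter fun i => φ₀ (G i) = 0 ∧ ψ (G i) = 0).card := by
      apply Finset.card_le_card
      intro i hi
      rw [Finset.mem_filter] at hi ⊢
      exact ⟨hi.1, hφ₀ker _ hi.2, hψker _ hi.2⟩
    have hm : (Finset.univ.filter fun i => φ₀ (G i) = 0 ∧ ψ (G i) = 0).card = j := by omega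
    -- tightness: all q+1 hyperplanes through the pencil are secant
    have hid := count_identity G φ₀ ψ
    rw [hm] at hid
    have hsum_le : ∑ cc : F, (hypCount G (ψ + cc • φ₀) + d) ≤ ∑ _cc : F, n :=
      Finset.sum_le_sum fun cc _ => hb _ (hpair.add_ne cc)
    rw [Finset.sum_add_distrib, Finset.sum_const, Finset.card_univ, smul_eq_mul] at hsum_le
    simp only [Finset.sum_const, Finset.card_univ, smul_eq_mul] at hsum_le
    have hA : hypCount G φ₀ + d ≤ n := hb φ₀ hpair.left_ne
    have e10 : Fintype.card F * j + Fintype.card F * d + d = Fintype.card F * n := by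
      have f1 : Fintype.card F * n + Fintype.card F * 1
          = Fintype.card F * d + Fintype.card F * s + Fintype.card F * k := by
        rw [← Nat.mul_add, ← Nat.mul_add, ← Nat.mul_add, hn]
      have f2 : Fintype.card F * j + Fintype.card F * 2 = Fintype.card F * k := by
        have hj2 : j + 2 = k := by omega
        rw [← Nat.mul_add, hj2]
      have f3 : d = s * Fintype.card F + Fintype.card F := by rw [hd]; ring
      have f4 : Fintype.card F * s = s * Fintype.card F := by ring
      set A1 := Fintype.card F * j
      set A2 := Fintype.card F * d
      set A3 := Fintype.card F * n
      set A4 := Fintype.card F * s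
      set A5 := Fintype.card F * k
      set A6 := s * Fintype.card F
      omega
    have hsecφ₀ : hypCount G φ₀ + d = n := by
      set S := ∑ cc : F, hypCount G (ψ + cc • φ₀)
      set A1 := Fintype.card F * j
      set A2 := Fintype.card F * d
      set A3 := Fintype.card F * n
      omega
    have hSsum : ∑ cc : F, hypCount G (ψ + cc • φ₀)
        = Fintype.card F * j + d := by
      set S := ∑ cc : F, hypCount G (ψ + cc • φ₀)
      set A1 := Fintype.card F * j
      set A2 := Fintype.card F * d
      set A3 := Fintype.card F * n
      omega
    have hallc : ∀ cc : F, hypCount G (ψ + cc • φ₀) + d = n := by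
      intro c0
      by_contra hne0
      have hlt : hypCount G (ψ + c0 • φ₀) + d < n :=
        lt_of_le_of_ne (hb _ (hpair.add_ne c0)) hne0
      have hstrict := Finset.sum_lt_sum
        (f := fun cc => hypCount G (ψ + cc • φ₀) + d) (g := fun _ => n)
        (s := Finset.univ) (fun cc _ => hb _ (hpair.add_ne cc))
        ⟨c0, Finset.mem_univ c0, hlt⟩
      rw [Finset.sum_add_distrib, Finset.sum_const, Finset.card_univ, smul_eq_mul] at hstrict
      simp only [Finset.sum_const, Finset.card_univ, smul_eq_mul] at hstrict
      rw [hSsum] at hstrict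
      set A1 := Fintype.card F * j
      set A2 := Fintype.card F * d
      set A3 := Fintype.card F * n
      omega
    -- the normalization of the q+1 functionals enumerates MS
    have hφ₀T : ∀ v ∈ T, φ₀ v = 0 := fun v hv => hφ₀ker v (Submodule.subset_span hv)
    have hψT : ∀ v ∈ T, ψ v = 0 := fun v hv => hψker v (Submodule.subset_span hv)
    have hvan : ∀ (χ0 : (Fin k → F) →ₗ[F] F), χ0 ≠ 0 → (∀ v ∈ T, χ0 v = 0) →
        ∀ v ∈ T, Nz χ0 v = 0 := by
      intro χ0 h0 hv0 v hv
      obtain ⟨c', hc', hEq⟩ := Nz_spec h0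
      rw [hEq, LinearMap.smul_apply, hv0 v hv, smul_zero]
    set e : Option F → ((Fin k → F) →ₗ[F] F) :=
      fun o => o.elim (Nz φ₀) (fun cc => Nz (ψ + cc • φ₀)) with he
    have hinj : Function.Injective e := by
      intro o1 o2 hEq
      match o1, o2 with
      | none, none => rfl
      | none, some cc =>
        exfalso
        simp only [he, Option.elim] at hEq
        obtain ⟨a, ha, haEq⟩ := Nz_spec hφ₀ne
        obtain ⟨b, hbz, hbEq⟩ := Nz_spec (hpair.add_ne cc)
        have h0 : a • φ₀ - b • (ψ + cc • φ₀) = 0 := by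
          rw [← haEq, ← hbEq, hEq, sub_self]
        have hmod : (a - b * cc) • φ₀ + (-b) • ψ = a • φ₀ - b • (ψ + cc • φ₀) := by
          module
        have := hpair (a - b * cc) (-b) (by rw [hmod, h0])
        exact hbz (neg_eq_zero.mp this.2)
      | some cc, none =>
        exfalso
        simp only [he, Option.elim] at hEq
        obtain ⟨a, ha, haEq⟩ := Nz_spec hφ₀ne
        obtain ⟨b, hbz, hbEq⟩ := Nz_spec (hpair.add_ne cc)
        have h0 : a • φ₀ - b • (ψ + cc • φ₀) = 0 := by
          rw [← haEq, ← hbEq, hEq, sub_self]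
        have hmod : (a - b * cc) • φ₀ + (-b) • ψ = a • φ₀ - b • (ψ + cc • φ₀) := by
          module
        have := hpair (a - b * cc) (-b) (by rw [hmod, h0])
        exact hbz (neg_eq_zero.mp this.2)
      | some cc, some cc' =>
        simp only [he, Option.elim] at hEq
        obtain ⟨a, ha, haEq⟩ := Nz_spec (hpair.add_ne cc)
        obtain ⟨b, hbz, hbEq⟩ := Nz_spec (hpair.add_ne cc')
        have h0 : a • (ψ + cc • φ₀) - b • (ψ + cc' • φ₀) = 0 := by
          rw [← haEq, ← hbEq, hEq, sub_self]
        have hmod : (a * cc - b * cc') • φ₀ + (a - b) • ψ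
            = a • (ψ + cc • φ₀) - b • (ψ + cc' • φ₀) := by module
        have hres := hpair (a * cc - b * cc') (a - b) (by rw [hmod, h0])
        have hab : a = b := sub_eq_zero.mp hres.2
        have hcc : a * cc = b * cc' := sub_eq_zero.mp hres.1
        rw [hab] at hcc
        rw [mul_left_cancel₀ (hab ▸ ha) hcc]
    have himg : MS G d T = Finset.image e Finset.univ := by
      apply Finset.ext
      intro χ
      simp only [MS, Finset.mem_filter, Finset.mem_univ, true_and, Finset.mem_image]
      constructor
      · rintro ⟨⟨hχne, hχnorm⟩, hχsec, hχT⟩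
        have hχW : ∀ x ∈ W, χ x = 0 := by
          have hle : W ≤ LinearMap.ker χ := by
            rw [hW, Submodule.span_le]
            intro v hv
            rw [SetLike.mem_coe, LinearMap.mem_ker]
            exact hχT v hv
          exact fun x hx => LinearMap.mem_ker.mp (hle hx)
        have hmk := mem_ker_pair hpair (by omega : finrank F W + 2 = k) hφ₀ker hψker
        obtain ⟨a, b, hab⟩ := mem_span_pair hpair χ (fun x h1 h2 => hχW x (hmk x h1 h2))
        by_cases hbz : b = 0
        · refine ⟨none, ?_⟩
          have haz : a ≠ 0 := by
            intro haz
            apply hχne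
            rw [hab, haz, hbz]
            simp
          have hχa : χ = a • φ₀ := by rw [hab, hbz]; simp
          simp only [he, Option.elim]
          calc Nz φ₀ = Nz (a • φ₀) := (Nz_smul hφ₀ne haz).symm
            _ = Nz χ := by rw [← hχa]
            _ = χ := hχnorm
        · refine ⟨some (b⁻¹ * a), ?_⟩
          have hχb : χ = b • (ψ + (b⁻¹ * a) • φ₀) := by
            rw [hab, smul_add, smul_smul, mul_inv_cancel_left₀ hbz]
            module
          simp only [he, Option.elim]
          calc Nz (ψ + (b⁻¹ * a) • φ₀) = Nz (b • (ψ + (b⁻¹ * a) • φ₀)) :=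
              (Nz_smul (hpair.add_ne _) hbz).symm
            _ = Nz χ := by rw [← hχb]
            _ = χ := hχnorm
      · rintro ⟨o, rfl⟩
        match o with
        | none =>
          simp only [he, Option.elim]
          exact ⟨⟨Nz_ne_zero hφ₀ne, Nz_idem hφ₀ne⟩,
            by rw [hypCount_Nz G hφ₀ne]; exact hsecφ₀, hvan φ₀ hφ₀ne hφ₀T⟩
        | some cc =>
          simp only [he, Option.elim]
          refine ⟨⟨Nz_ne_zero (hpair.add_ne cc), Nz_idem (hpair.add_ne cc)⟩,
            by rw [hypCount_Nz G (hpair.add_ne cc)]; exact hallc cc, ?_⟩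
          apply hvan _ (hpair.add_ne cc)
          intro v hv
          rw [LinearMap.add_apply, LinearMap.smul_apply, hψT v hv, hφ₀T v hv,
            smul_zero, add_zero]
    rw [himg, Finset.card_image_of_injective _ hinj, Finset.card_univ,
      Fintype.card_option]
  | succ c ih =>
    intro j hjk T hTsub hTcard hTind
    set W := Submodule.span F (↑T : Set (Fin k → F)) with hW
    have hWfr : finrank F W = j := by rw [hW, finrank_span_finset T hTind, hTcard]
    have hTW : ↑T ⊆ (W : Set (Fin k → F)) := Submodule.subset_span
    have hins : ∀ i0 : Fin n, G i0 ∉ W →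
        (MS G d (insert (G i0) T)).card * ∏ u ∈ Finset.Icc 2 (c + 1), (s + u)
          = (Fintype.card F + 1) * ∏ u ∈ Finset.Icc 2 (c + 1), (d + s + u) := by
      intro i0 hi0
      have hTnew : (insert (G i0) T).card = j + 1 := by
        rw [Finset.card_insert_of_notMem (fun hmem => hi0 (hTW hmem)), hTcard]
      have hindnew : LinearIndependent F
          (Subtype.val : ↑(↑(insert (G i0) T) : Set (Fin k → F)) → (Fin k → F)) := by
        rw [Finset.coe_insert]
        exact LinearIndepOn.id_insert (hTind : LinearIndepOn F id (↑T : Set (Fin k → F)))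
          (by rw [← hW]; exact hi0)
      have hsubnew : ↑(insert (G i0) T) ⊆ Set.range G := by
        rw [Finset.coe_insert]
        intro v hv
        rcases Set.mem_insert_iff.mp hv with h | h
        · exact ⟨i0, h.symm⟩
        · exact hTsub h
      exact (ih (j + 1) (by omega) _ hsubnew hTnew hindnew).2
    -- a point outside W exists
    have hex : ∃ i0 : Fin n, G i0 ∉ W := by
      by_contra h
      push_neg at h
      have hle : Submodule.span F (Set.range G) ≤ W :=
        Submodule.span_le.mpr (by rintro v ⟨i, rfl⟩; exact h i)
      rw [hspan, top_le_iff] at hle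
      have : finrank F W = k := by
        rw [hle, finrank_top, Module.finrank_pi]
        simp
      omega
    obtain ⟨i0, hi0⟩ := hex
    -- a secant hyperplane through W
    have hP2pos : 0 < ∏ u ∈ Finset.Icc 2 (c + 1), (d + s + u) :=
      Finset.prod_pos fun u hu => by omega
    have hpos : 0 < (MS G d (insert (G i0) T)).card := by
      have h2 := hins i0 hi0
      rcases Nat.eq_zero_or_pos (MS G d (insert (G i0) T)).card with h0 | h0
      · rw [h0, zero_mul] at h2
        have hq1 : 0 < (Fintype.card F + 1) * ∏ u ∈ Finset.Icc 2 (c + 1), (d + s + u) :=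
          Nat.mul_pos (by omega) hP2pos
        omega
      · exact h0
    obtain ⟨φstar, hφstar⟩ := Finset.card_pos.mp hpos
    simp only [MS, Finset.mem_filter, Finset.mem_univ, true_and] at hφstar
    obtain ⟨⟨hsne, _⟩, hssec, hsT⟩ := hφstar
    have hsW : ∀ x ∈ W, φstar x = 0 := by
      have hle : W ≤ LinearMap.ker φstar := by
        rw [hW, Submodule.span_le]
        intro v hv
        rw [SetLike.mem_coe, LinearMap.mem_ker]
        exact hsT v (Finset.mem_insert_of_mem hv)
      exact fun x hx => LinearMap.mem_ker.mp (hle hx)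
    -- exactly j points in W
    have hcount : (Finset.univ.filter fun i => G i ∈ W).card = j := by
      have hle := secant_subspace_card G hb hd hn (c + 1) W φstar hssec hsW (by omega)
      have hge : T.card ≤ (Finset.univ.filter fun i => G i ∈ W).card := by
        apply card_le_filter_of_forall
        intro v hv
        obtain ⟨i, hGi⟩ := hTsub hv
        exact ⟨i, by rw [hGi]; exact Submodule.subset_span hv, hGi⟩
      omega
    refine ⟨hcount, ?_⟩
    -- double counting
    have hswap : ∑ φ ∈ MS G d T, (Finset.univ.filter fun i => φ (G i) = 0 ∧ G i ∉ W).card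
        = ∑ i ∈ Finset.univ.filter (fun i => G i ∉ W), (MS G d (insert (G i) T)).card := by
      calc ∑ φ ∈ MS G d T, (Finset.univ.filter fun i => φ (G i) = 0 ∧ G i ∉ W).card
          = ∑ φ ∈ MS G d T, ∑ i : Fin n, (if φ (G i) = 0 ∧ G i ∉ W then 1 else 0) := by
            exact Finset.sum_congr rfl fun φ _ => Finset.card_filter _ _
        _ = ∑ i : Fin n, ∑ φ ∈ MS G d T, (if φ (G i) = 0 ∧ G i ∉ W then 1 else 0) :=
            Finset.sum_comm
        _ = ∑ i : Fin n, (if G i ∉ W then (MS G d (insert (G i) T)).card else 0) := by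
            refine Finset.sum_congr rfl fun i _ => ?_
            by_cases hiW : G i ∈ W
            · simp [hiW]
            · rw [if_pos hiW]
              calc ∑ φ ∈ MS G d T, (if φ (G i) = 0 ∧ G i ∉ W then 1 else 0)
                  = ∑ φ ∈ MS G d T, (if φ (G i) = 0 then 1 else 0) :=
                    Finset.sum_congr rfl fun φ _ => by
                      rw [if_congr (and_iff_left hiW) rfl rfl]
                _ = ((MS G d T).filter fun φ => φ (G i) = 0).card :=
                    (Finset.card_filter _ _).symm
                _ = (MS G d (insert (G i) T)).card := by
                    congr 1
                    simp only [MS]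
                    rw [Finset.filter_filter]
                    apply Finset.filter_congr
                    intro φ _
                    constructor
                    · rintro ⟨⟨hn1, hn2, hn3⟩, h4⟩
                      refine ⟨hn1, hn2, fun v hv => ?_⟩
                      rcases Finset.mem_insert.mp hv with h | h
                      · rw [h]; exact h4
                      · exact hn3 v h
                    · rintro ⟨hn1, hn2, hn3⟩
                      exact ⟨⟨hn1, hn2, fun v hv => hn3 v (Finset.mem_insert_of_mem hv)⟩,
                        hn3 _ (Finset.mem_insert_self _ _)⟩
        _ = ∑ i ∈ Finset.univ.filter (fun i => G i ∉ W),
              (MS G d (insert (G i) T)).card := (Finset.sum_filter _ _).symm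
    have hinner : ∀ φ ∈ MS G d T,
        (Finset.univ.filter fun i => φ (G i) = 0 ∧ G i ∉ W).card = s + c + 2 := by
      intro φ hφ
      simp only [MS, Finset.mem_filter, Finset.mem_univ, true_and] at hφ
      obtain ⟨⟨hφne, _⟩, hφsec, hφT⟩ := hφ
      have hφW : ∀ x ∈ W, φ x = 0 := by
        have hle : W ≤ LinearMap.ker φ := by
          rw [hW, Submodule.span_le]
          intro v hv
          rw [SetLike.mem_coe, LinearMap.mem_ker]
          exact hφT v hv
        exact fun x hx => LinearMap.mem_ker.mp (hle hx)
      have hsplit := Finset.card_filter_add_card_filter_not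
        (s := Finset.univ.filter fun i => φ (G i) = 0) (fun i => G i ∈ W)
      have h1 : (Finset.univ.filter fun i => φ (G i) = 0).filter (fun i => G i ∈ W)
          = Finset.univ.filter (fun i => G i ∈ W) := by
        rw [Finset.filter_filter]
        apply Finset.filter_congr
        intro i _
        exact ⟨fun h => h.2, fun h => ⟨hφW _ h, h⟩⟩
      have h2 : (Finset.univ.filter fun i => φ (G i) = 0).filter (fun i => ¬ G i ∈ W)
          = Finset.univ.filter (fun i => φ (G i) = 0 ∧ G i ∉ W) := by
        rw [Finset.filter_filter]
      have h3 : (Finset.univ.filter fun i => φ (G i) = 0).card + d = n := hφsec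
      rw [h1, h2, hcount] at hsplit
      omega
    have hLHS : ∑ φ ∈ MS G d T, (Finset.univ.filter fun i => φ (G i) = 0 ∧ G i ∉ W).card
        = (MS G d T).card * (s + c + 2) := by
      rw [Finset.sum_congr rfl hinner, Finset.sum_const, smul_eq_mul]
    have hNcard : (Finset.univ.filter fun i => G i ∉ W).card = d + s + c + 2 := by
      have hsplit := Finset.card_filter_add_card_filter_not
        (s := (Finset.univ : Finset (Fin n))) (fun i => G i ∈ W)
      rw [hcount, Finset.card_univ, Fintype.card_fin] at hsplit
      omega
    have hkey2 : (MS G d T).card * (s + c + 2) * ∏ u ∈ Finset.Icc 2 (c + 1), (s + u)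
        = (d + s + c + 2) *
            ((Fintype.card F + 1) * ∏ u ∈ Finset.Icc 2 (c + 1), (d + s + u)) := by
      calc (MS G d T).card * (s + c + 2) * ∏ u ∈ Finset.Icc 2 (c + 1), (s + u)
          = (∑ i ∈ Finset.univ.filter (fun i => G i ∉ W),
              (MS G d (insert (G i) T)).card) * ∏ u ∈ Finset.Icc 2 (c + 1), (s + u) := by
            rw [← hswap, hLHS]
        _ = ∑ i ∈ Finset.univ.filter (fun i => G i ∉ W),
              ((MS G d (insert (G i) T)).card * ∏ u ∈ Finset.Icc 2 (c + 1), (s + u)) :=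
            Finset.sum_mul _ _ _
        _ = ∑ _i ∈ Finset.univ.filter (fun i => G i ∉ W),
              ((Fintype.card F + 1) * ∏ u ∈ Finset.Icc 2 (c + 1), (d + s + u)) := by
            refine Finset.sum_congr rfl fun i hi => ?_
            rw [Finset.mem_filter] at hi
            exact hins i hi.2
        _ = _ := by
            rw [Finset.sum_const, hNcard, smul_eq_mul]
    rw [Finset.prod_Icc_succ_top (by omega : 2 ≤ c + 1 + 1),
      Finset.prod_Icc_succ_top (by omega : 2 ≤ c + 1 + 1),
      show s + (c + 1 + 1) = s + c + 2 from by ring,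
      show d + s + (c + 1 + 1) = d + s + c + 2 from by ring,
      show (MS G d T).card * ((∏ u ∈ Finset.Icc 2 (c + 1), (s + u)) * (s + c + 2))
          = (MS G d T).card * (s + c + 2) * ∏ u ∈ Finset.Icc 2 (c + 1), (s + u) from by ring,
      hkey2]
    ring

lemma prod_Icc_split (f : ℕ → ℕ) (m : ℕ) (hm : 1 ≤ m) :
    f 1 * ∏ u ∈ Finset.Icc 2 m, f u = ∏ u ∈ Finset.Icc 1 m, f u := by
  have h2 : Finset.Icc 2 m = Finset.Ioc 1 m := by
    ext x
    simp only [Finset.mem_Icc, Finset.mem_Ioc]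
    omega
  rw [h2, Finset.Icc_eq_cons_Ioc hm, Finset.prod_cons]

lemma fact_prod (a : ℕ) : ∀ m : ℕ,
    a.factorial * ∏ u ∈ Finset.Icc 1 m, (a + u) = (a + m).factorial := by
  intro m
  induction m with
  | zero => simp
  | succ m ihm =>
    rw [Finset.prod_Icc_succ_top (by omega : 1 ≤ m + 1), ← mul_assoc, ihm,
      show a + (m + 1) = (a + m) + 1 from rfl, Nat.factorial_succ]
    ring

lemma partB {d s p : ℕ} (G : Fin n → Fin k → F) (hk : 3 ≤ k) (hs : 1 ≤ s)
    (hG : IsCodePS F n k d G) (hd : d = (s + 1) * Fintype.card F)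
    (hn : n + 1 = d + s + k)
    (hp : p.Prime) (hps : s < p) (hpk : p < k + s)
    (hdvd : p ∣ ∏ i ∈ Finset.Icc 1 s, (Fintype.card F * (s + 1) + i)) : False := by
  classical
  obtain ⟨hd0, hnz, hspan, hb, -⟩ := hG
  have hdvd' : p ∣ ∏ i ∈ Finset.Icc 1 s, (d + i) := by
    have he : ∀ i, Fintype.card F * (s + 1) + i = d + i := by intro i; rw [hd]; ring
    have : (∏ i ∈ Finset.Icc 1 s, (Fintype.card F * (s + 1) + i))
        = ∏ i ∈ Finset.Icc 1 s, (d + i) := Finset.prod_congr rfl fun i _ => he i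
    rwa [this] at hdvd
  obtain ⟨i0, hi0mem, hi0⟩ := (Nat.Prime.prime hp).exists_mem_finset_dvd hdvd'
  rw [Finset.mem_Icc] at hi0mem
  obtain ⟨c0, hc0⟩ : ∃ c0, c0 + s + 1 = p := ⟨p - s - 1, by omega⟩
  obtain ⟨j0, hj0⟩ : ∃ j0, j0 + c0 + 2 = k := ⟨k - c0 - 2, by omega⟩
  obtain ⟨T, hTsub, hTcard, hTind⟩ := exists_indep_finset_subset (Set.range G)
    (Set.finite_range G) (j := j0)
    (by rw [hspan, finrank_top, Module.finrank_pi, Fintype.card_fin]; omega)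
  have hQ := (Qrec G hd0 hspan hb hd hn c0 j0 hj0 T hTsub hTcard hTind).2
  set N := (MS G d T).card with hN
  have hq1 : (Fintype.card F + 1) * (s + 1) = d + s + 1 := by rw [hd]; ring
  have hsplit1 : (s + 1) * ∏ u ∈ Finset.Icc 2 (c0 + 1), (s + u)
      = ∏ u ∈ Finset.Icc 1 (c0 + 1), (s + u) :=
    prod_Icc_split (fun u => s + u) (c0 + 1) (by omega)
  have hsplit2 : (d + s + 1) * ∏ u ∈ Finset.Icc 2 (c0 + 1), (d + s + u)
      = ∏ u ∈ Finset.Icc 1 (c0 + 1), (d + s + u) :=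
    prod_Icc_split (fun u => d + s + u) (c0 + 1) (by omega)
  have hfact : s.factorial * ∏ u ∈ Finset.Icc 1 (c0 + 1), (s + u) = p.factorial := by
    rw [fact_prod s (c0 + 1)]
    congr 1
    omega
  have hmain : N * p.factorial
      = s.factorial * ∏ u ∈ Finset.Icc 1 (c0 + 1), (d + s + u) := by
    calc N * p.factorial
        = N * (s.factorial * ∏ u ∈ Finset.Icc 1 (c0 + 1), (s + u)) := by rw [hfact]
      _ = N * (s.factorial * ((s + 1) * ∏ u ∈ Finset.Icc 2 (c0 + 1), (s + u))) := by
          rw [hsplit1]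
      _ = (s.factorial * (s + 1)) * (N * ∏ u ∈ Finset.Icc 2 (c0 + 1), (s + u)) := by
          ring
      _ = (s.factorial * (s + 1)) *
            ((Fintype.card F + 1) * ∏ u ∈ Finset.Icc 2 (c0 + 1), (d + s + u)) := by
          rw [hQ]
      _ = s.factorial * (((Fintype.card F + 1) * (s + 1)) *
            ∏ u ∈ Finset.Icc 2 (c0 + 1), (d + s + u)) := by ring
      _ = s.factorial * ((d + s + 1) * ∏ u ∈ Finset.Icc 2 (c0 + 1), (d + s + u)) := by
          rw [hq1]
      _ = s.factorial * ∏ u ∈ Finset.Icc 1 (c0 + 1), (d + s + u) := by rw [hsplit2]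
  have hpdvd : p ∣ N * p.factorial :=
    Dvd.dvd.mul_left (Nat.dvd_factorial hp.pos le_rfl) N
  rw [hmain] at hpdvd
  rcases (Nat.Prime.dvd_mul hp).mp hpdvd with h | h
  · exact absurd ((Nat.Prime.dvd_factorial hp).mp h) (by omega)
  · obtain ⟨u, humem, hu⟩ := (Nat.Prime.prime hp).exists_mem_finset_dvd h
    rw [Finset.mem_Icc] at humem
    have hdiff : p ∣ (s + u - i0) := by
      have h2 := Nat.dvd_sub hu hi0
      have h3 : d + s + u - (d + i0) = s + u - i0 := by omega
      rwa [h3] at h2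
    have hpos2 : 0 < s + u - i0 := by omega
    exact absurd (Nat.le_of_dvd hpos2 hdiff) (by omega)

end AMDS

/-- Let `s ≥ 1`, `k ≥ 3`, and suppose some prime `p` with `s < p < k + s` divides
`∏_{i=1}^{s} (q(s+1) + i)`. Then `m^s(k,q) ≤ (s+1)(q+1) + k - 3`; i.e. no
`[n,k,d]_q` A^sMDS code attains the length `n = (s+1)(q+1) + k - 2`. -/
theorem prime_divisor_length_bound (F : Type*) [Field F] [Fintype F] [DecidableEq F]
    (k s p : ℕ) (hs : 1 ≤ s) (hk : 3 ≤ k)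
    (hp : p.Prime) (hps : s < p) (hpk : p < k + s)
    (hdvd : p ∣ ∏ i ∈ Finset.Icc 1 s, (Fintype.card F * (s + 1) + i)) :
    mPar F s k + 3 ≤ (s + 1) * (Fintype.card F + 1) + k := by
  classical
  have hub : ∀ m ∈ {n : ℕ | ∃ d : ℕ, ∃ G : Fin n → Fin k → F,
      IsCodePS F n k d G ∧ d + k + s = n + 1},
      m ≤ (s + 1) * (Fintype.card F + 1) + k - 3 := by
    rintro m ⟨d, G, hG, hlen⟩
    have hA := AMDS.partA G hk hG hlen
    by_cases hEq : m + 2 = (s + 1) * (Fintype.card F + 1) + k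
    · exfalso
      have hd : d = (s + 1) * Fintype.card F := by
        have e : (s + 1) * (Fintype.card F + 1)
            = (s + 1) * Fintype.card F + s + 1 := by ring
        omega
      exact AMDS.partB G hk hs hG hd (by omega) hp hps hpk hdvd
    · omega
  have hsup := csSup_le' hub
  have hmp : mPar F s k ≤ (s + 1) * (Fintype.card F + 1) + k - 3 := hsup
  have hk3 : 3 ≤ (s + 1) * (Fintype.card F + 1) + k := by omega
  omega
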